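/- Let A be a semi-pre-C*-algebra over ℂ, let W ⊆ A be a ℂ-linear subspace closed under the involution, and let v be a hermitian element of A that does not belong to the set {a + w : a ∈ A₊, w ∈ W, w* = w}. Then there exists a state φ on A such that φ(w) = 0 for all w ∈ W and φ(v) ≤ 0 (φ(v) is a real number at most 0). -/

import Mathlib

/-- A *-positive cone making a unital complex *-algebra `A` into a
semi-pre-C*-algebra: `A₊ = P` consists of hermitian elements, contains the nonnegative
real multiples of `1`, is closed under nonnegative real scalar multiples and addition,
is closed under conjugation `x* a x`, and satisfies the Combes (archimedean) axiom. -/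
structure IsSemiPreCstarCone (A : Type*) [Ring A] [Algebra ℂ A] [StarRing A]
    (P : Set A) : Prop where
  herm : ∀ a ∈ P, star a = a
  smul_one_mem : ∀ t : ℝ, 0 ≤ t → ((t : ℂ) • (1 : A)) ∈ P
  smul_add_mem : ∀ l : ℝ, 0 ≤ l → ∀ a ∈ P, ∀ b ∈ P, (l : ℂ) • a + b ∈ P
  conj_mem : ∀ a ∈ P, ∀ x : A, star x * a * x ∈ P
  archimedean : ∀ x : A, ∃ R : ℝ, 0 < R ∧ (R : ℂ) • (1 : A) - star x * x ∈ P

/-- A state on a semi-pre-C*-algebra `(A, P)`: a unital, self-adjoint linear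
functional that takes nonnegative real values on the cone `P`. -/
structure IsStateOn {A : Type*} [Ring A] [Algebra ℂ A] [StarRing A]
    (P : Set A) (φ : A →ₗ[ℂ] ℂ) : Prop where
  map_one : φ 1 = 1
  map_star : ∀ x : A, φ (star x) = starRingEnd ℂ (φ x)
  pos : ∀ a ∈ P, ∃ r : ℝ, 0 ≤ r ∧ φ a = r

section Aux

variable {A : Type*} [Ring A] [Algebra ℂ A] [StarRing A] {P : Set A}

theorem SPCA.zero_mem (hP : IsSemiPreCstarCone A P) : (0 : A) ∈ P := by
  simpa using hP.smul_one_mem 0 le_rfl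

theorem SPCA.one_mem (hP : IsSemiPreCstarCone A P) : (1 : A) ∈ P := by
  simpa using hP.smul_one_mem 1 zero_le_one

theorem SPCA.add_mem (hP : IsSemiPreCstarCone A P) {a b : A} (ha : a ∈ P) (hb : b ∈ P) :
    a + b ∈ P := by
  simpa using hP.smul_add_mem 1 zero_le_one a ha b hb

theorem SPCA.smul_mem (hP : IsSemiPreCstarCone A P) (l : ℝ) (hl : 0 ≤ l) {a : A} (ha : a ∈ P) :
    (l : ℂ) • a ∈ P := by
  simpa using hP.smul_add_mem l hl a ha 0 (SPCA.zero_mem hP)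

theorem SPCA.sq_mem (hP : IsSemiPreCstarCone A P) (x : A) : star x * x ∈ P := by
  simpa using hP.conj_mem 1 (SPCA.one_mem hP) x

theorem SPCA.star_coe_smul (hP : IsSemiPreCstarCone A P) (r : ℝ) (x : A) :
    star ((r : ℂ) • x) = (r : ℂ) • star x := by
  have h1 : ∀ t : ℝ, star ((t : ℂ) • (1 : A)) = (t : ℂ) • (1 : A) := by
    intro t
    rcases le_or_gt 0 t with ht | ht
    · exact hP.herm _ (hP.smul_one_mem t ht)
    · have h := hP.herm _ (hP.smul_one_mem (-t) (by linarith))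
      push_cast at h
      rw [neg_smul, star_neg, neg_inj] at h
      exact h
  calc star ((r : ℂ) • x) = star (((r : ℂ) • (1 : A)) * x) := by rw [smul_mul_assoc, one_mul]
    _ = star x * star ((r : ℂ) • (1 : A)) := star_mul _ _
    _ = star x * ((r : ℂ) • (1 : A)) := by rw [h1]
    _ = (r : ℂ) • star x := by rw [mul_smul_comm, mul_one]

theorem SPCA.orderUnit (hP : IsSemiPreCstarCone A P) (h : A) (hh : star h = h) :
    ∃ R : ℝ, 0 < R ∧ (R : ℂ) • (1 : A) - h ∈ P := by
  obtain ⟨R, hR, hmem⟩ := hP.archimedean (1 + h)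
  have hsq : (1 - h) * (1 - h) ∈ P := by
    have h2 := SPCA.sq_mem hP (1 - h)
    rwa [star_sub, star_one, hh] at h2
  have h1 : star (1 + h) = 1 + h := by rw [star_add, star_one, hh]
  have hmem2 : ((R : ℂ) • (1 : A) - star (1 + h) * (1 + h)) + (1 - h) * (1 - h) ∈ P :=
    SPCA.add_mem hP hmem hsq
  refine ⟨R / 4, by linarith, ?_⟩
  have key : ((R / 4 : ℝ) : ℂ) • (1 : A) - h
      = ((1 / 4 : ℝ) : ℂ) • (((R : ℂ) • (1 : A) - star (1 + h) * (1 + h)) + (1 - h) * (1 - h)) := by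
    rw [h1]
    simp only [mul_add, add_mul, mul_sub, sub_mul, mul_one, one_mul]
    push_cast
    module
  rw [key]
  exact SPCA.smul_mem hP _ (by norm_num) hmem2

end Aux

/-- If `W` is a *-subspace of a semi-pre-C*-algebra `A` and `v` is a hermitian element
not of the form `a + w` with `a ∈ A₊` and `w ∈ W` hermitian, then there is a state `φ`
on `A` vanishing on `W` with `φ v ≤ 0` (a real number at most `0`). -/
theorem state_separation_from_cone_plus_subspace
    {A : Type*} [Ring A] [Algebra ℂ A] [StarRing A] (P : Set A)
    (hP : IsSemiPreCstarCone A P)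
    (W : Submodule ℂ A) (hW : ∀ w ∈ W, star w ∈ W)
    (v : A) (hv : star v = v)
    (hsep : ¬ ∃ a ∈ P, ∃ w ∈ W, star w = w ∧ v = a + w) :
    ∃ φ : A →ₗ[ℂ] ℂ, IsStateOn P φ ∧ (∀ w ∈ W, φ w = 0) ∧
      ∃ r : ℝ, r ≤ 0 ∧ φ v = r := by
  classical
  have P0 : (0 : A) ∈ P := SPCA.zero_mem hP
  have P1 : (1 : A) ∈ P := SPCA.one_mem hP
  have Padd : ∀ {a b : A}, a ∈ P → b ∈ P → a + b ∈ P := fun ha hb => SPCA.add_mem hP ha hb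
  have Psmul : ∀ (l : ℝ), 0 ≤ l → ∀ {a : A}, a ∈ P → (l : ℂ) • a ∈ P :=
    fun l hl => fun {a} ha => SPCA.smul_mem hP l hl ha
  have Psq : ∀ x : A, star x * x ∈ P := SPCA.sq_mem hP
  have starSmul : ∀ (r : ℝ) (x : A), star ((r : ℂ) • x) = (r : ℂ) • star x :=
    SPCA.star_coe_smul hP
  -- the hermitian cone `P + W_h`
  set Cs : Set A := {x | ∃ p ∈ P, ∃ w ∈ W, star w = w ∧ x = p + w} with hCs
  have hvC : v ∉ Cs := by
    rintro ⟨p, hp, w, hw, hws, hveq⟩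
    exact hsep ⟨p, hp, w, hw, hws, hveq⟩
  have CsAdd : ∀ x ∈ Cs, ∀ y ∈ Cs, x + y ∈ Cs := by
    rintro x ⟨p, hp, w, hw, hws, rfl⟩ y ⟨q, hq, u, hu, hus, rfl⟩
    exact ⟨p + q, Padd hp hq, w + u, W.add_mem hw hu,
      by rw [star_add, hws, hus], by abel⟩
  have CsSmul : ∀ (l : ℝ), 0 ≤ l → ∀ x ∈ Cs, (l : ℂ) • x ∈ Cs := by
    rintro l hl x ⟨p, hp, w, hw, hws, rfl⟩
    exact ⟨(l : ℂ) • p, Psmul l hl hp, (l : ℂ) • w, W.smul_mem _ hw,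
      by rw [starSmul, hws], smul_add _ _ _⟩
  -- key positivity estimate
  have keyA : ∀ α β : ℝ, 0 ≤ β → ((α : ℂ) • (1 : A) + (β : ℂ) • v ∈ Cs) → 0 ≤ α := by
    intro α β hβ hmem
    by_contra hcon
    push_neg at hcon
    obtain ⟨p, hp, w, hw, hws, heq⟩ := hmem
    have hα : α ≠ 0 := ne_of_lt hcon
    rcases eq_or_lt_of_le hβ with hβ0 | hβpos
    · -- β = 0
      have heq' : (α : ℂ) • (1 : A) = p + w := by
        rw [← hβ0] at heq
        push_cast at heq
        rwa [zero_smul, add_zero] at heq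
      obtain ⟨R, hR, hRv⟩ := SPCA.orderUnit hP (-v) (by rw [star_neg, hv])
      rw [sub_neg_eq_add] at hRv
      set c : ℝ := R / (-α) with hc
      have hc0 : 0 ≤ c := le_of_lt (div_pos hR (by linarith))
      have h3 : c * α = -R := by
        rw [hc]; field_simp
      have h2 : (c : ℂ) • p + (c : ℂ) • w = ((-R : ℝ) : ℂ) • (1 : A) := by
        rw [← smul_add, ← heq', smul_smul, ← Complex.ofReal_mul, h3]
      apply hvC
      refine ⟨((R : ℂ) • (1 : A) + v) + (c : ℂ) • p, Padd hRv (Psmul c hc0 hp),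
        (c : ℂ) • w, W.smul_mem _ hw, by rw [starSmul, hws], ?_⟩
      calc v = ((R : ℂ) • (1 : A) + v) + ((-R : ℝ) : ℂ) • (1 : A) := by push_cast; module
        _ = ((R : ℂ) • (1 : A) + v) + ((c : ℂ) • p + (c : ℂ) • w) := by rw [h2]
        _ = (((R : ℂ) • (1 : A) + v) + (c : ℂ) • p) + (c : ℂ) • w := by abel
    · -- β > 0
      have hβne : β ≠ 0 := ne_of_gt hβpos
      have h5 : (β : ℂ) • v = p + w - (α : ℂ) • (1 : A) := by rw [← heq]; abel
      have h6 : v = ((1 / β : ℝ) : ℂ) • (p + w - (α : ℂ) • (1 : A)) := by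
        rw [← h5, smul_smul, ← Complex.ofReal_mul, one_div_mul_cancel hβne,
          Complex.ofReal_one, one_smul]
      apply hvC
      refine ⟨((1 / β : ℝ) : ℂ) • p + ((-α / β : ℝ) : ℂ) • (1 : A),
        Padd (Psmul (1 / β) (by positivity) hp)
          (hP.smul_one_mem (-α / β) (div_nonneg (by linarith) hβ)),
        ((1 / β : ℝ) : ℂ) • w, W.smul_mem _ hw, by rw [starSmul, hws], ?_⟩
      rw [h6]
      push_cast
      module
  -- the convex cone for the Riesz extension theorem
  have Kadd : ∀ x ∈ {x : A | ∃ β : ℝ, 0 ≤ β ∧ x + star x + (β : ℂ) • v ∈ Cs},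
      ∀ y ∈ {x : A | ∃ β : ℝ, 0 ≤ β ∧ x + star x + (β : ℂ) • v ∈ Cs},
      x + y ∈ {x : A | ∃ β : ℝ, 0 ≤ β ∧ x + star x + (β : ℂ) • v ∈ Cs} := by
    rintro x ⟨β, hβ, hx⟩ y ⟨γ, hγ, hy⟩
    refine ⟨β + γ, add_nonneg hβ hγ, ?_⟩
    have hrw : (x + y) + star (x + y) + ((β + γ : ℝ) : ℂ) • v
        = (x + star x + (β : ℂ) • v) + (y + star y + (γ : ℂ) • v) := by
      rw [star_add]; push_cast; module
    rw [hrw]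
    exact CsAdd _ hx _ hy
  let K : ConvexCone ℝ A :=
    { carrier := {x : A | ∃ β : ℝ, 0 ≤ β ∧ x + star x + (β : ℂ) • v ∈ Cs}
      smul_mem' := by
        rintro cr hcr x ⟨β, hβ, hmem⟩
        refine ⟨cr * β, mul_nonneg hcr.le hβ, ?_⟩
        have hrw : cr • x + star (cr • x) + ((cr * β : ℝ) : ℂ) • v
            = (cr : ℂ) • (x + star x + (β : ℂ) • v) := by
          rw [← Complex.coe_smul, starSmul]
          push_cast
          module
        rw [hrw]
        exact CsSmul cr hcr.le _ hmem
      add_mem' := fun {x} hx {y} hy => Kadd x hx y hy }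
  have h1ne : (1 : A) ≠ 0 := by
    intro h10
    have : Subsingleton A := subsingleton_of_zero_eq_one h10.symm
    exact hsep ⟨0, P0, 0, W.zero_mem, star_zero _, Subsingleton.elim _ _⟩
  obtain ⟨g, hgf, hgK⟩ :=
    riesz_extension (K.toPointedCone (show ∃ β : ℝ, 0 ≤ β ∧ (0 : A) + star 0 + (β : ℂ) • v ∈ Cs from
      ⟨0, le_rfl, 0, P0, 0, W.zero_mem, star_zero _, by simp⟩)) (LinearPMap.mkSpanSingleton (1 : A) (1 : ℝ) h1ne)
    (by
      rintro ⟨x, hx⟩ hxK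
      obtain ⟨a, rfl⟩ := Submodule.mem_span_singleton.1 hx
      rw [LinearPMap.mkSpanSingleton'_apply]
      obtain ⟨β, hβ, hmem⟩ := hxK
      have hrw : a • (1 : A) + star (a • (1 : A)) + (β : ℂ) • v
          = ((2 * a : ℝ) : ℂ) • (1 : A) + (β : ℂ) • v := by
        rw [← Complex.coe_smul, starSmul, star_one]
        push_cast
        module
      rw [hrw] at hmem
      have h0 := keyA (2 * a) β hβ hmem
      simp only [smul_eq_mul, mul_one, RingHom.id_apply]
      linarith)
    (by
      intro y
      obtain ⟨R, hR, hmem⟩ := SPCA.orderUnit hP (-(y + star y))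
        (by rw [star_neg, star_add, star_star, add_comm])
      rw [sub_neg_eq_add] at hmem
      refine ⟨⟨(R / 2) • (1 : A), Submodule.mem_span_singleton.2 ⟨R / 2, rfl⟩⟩,
        ⟨0, le_rfl, ?_⟩⟩
      refine ⟨(R : ℂ) • (1 : A) + (y + star y), hmem, 0, W.zero_mem, star_zero _, ?_⟩
      have hshow : ((R / 2 : ℝ) : ℂ) • (1 : A) + y
            + star (((R / 2 : ℝ) : ℂ) • (1 : A) + y) + ((0 : ℝ) : ℂ) • v
          = (R : ℂ) • (1 : A) + (y + star y) + 0 := by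
        rw [star_add, starSmul, star_one]
        push_cast
        module
      exact hshow)
  have hg1 : g 1 = 1 := by
    have h := hgf ⟨1, Submodule.mem_span_singleton_self 1⟩
    rwa [LinearPMap.mkSpanSingleton_apply] at h
  -- basic consequences
  have memK : ∀ x : A, (∃ p ∈ P, ∃ w ∈ W, star w = w ∧ x + star x = p + w) → (0 : ℝ) ≤ g x := by
    rintro x ⟨p, hp, w, hw, hws, hx⟩
    refine hgK x ⟨0, le_rfl, p, hp, w, hw, hws, ?_⟩
    push_cast
    rw [zero_smul, add_zero, hx]
  have gP : ∀ p ∈ P, 0 ≤ g p := by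
    intro p hp
    exact memK p ⟨p + p, Padd hp hp, 0, W.zero_mem, star_zero _,
      by rw [hP.herm p hp, add_zero]⟩
  have gskew : ∀ k : A, star k = -k → g k = 0 := by
    intro k hk
    have h1 : 0 ≤ g k := memK k ⟨0, P0, 0, W.zero_mem, star_zero _, by rw [hk]; simp⟩
    have h2 : 0 ≤ g (-k) := memK (-k)
      ⟨0, P0, 0, W.zero_mem, star_zero _, by rw [star_neg, hk]; simp⟩
    rw [map_neg] at h2
    linarith
  have gWherm : ∀ w ∈ W, star w = w → g w = 0 := by
    intro w hw hws
    have h1 : 0 ≤ g w := memK w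
      ⟨0, P0, w + w, W.add_mem hw hw, by rw [star_add, hws], by rw [hws, zero_add]⟩
    have h2 : 0 ≤ g (-w) := memK (-w)
      ⟨0, P0, -(w + w), W.neg_mem (W.add_mem hw hw),
        by rw [star_neg, star_add, hws], by rw [star_neg, hws]; abel⟩
    rw [map_neg] at h2
    linarith
  have gW : ∀ w ∈ W, g w = 0 := by
    intro w hw
    obtain ⟨h2, hh2⟩ : ∃ y : A, y = ((1 / 2 : ℝ) : ℂ) • (w + star w) := ⟨_, rfl⟩
    have hh2W : h2 ∈ W := by rw [hh2]; exact W.smul_mem _ (W.add_mem hw (hW w hw))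
    have hh2herm : star h2 = h2 := by rw [hh2, starSmul, star_add, star_star, add_comm]
    have hsum : h2 + h2 = w + star w := by rw [hh2]; push_cast; module
    have hkskew : star (w - h2) = -(w - h2) := by
      rw [star_sub, hh2herm, neg_sub, sub_eq_sub_iff_add_eq_add, hsum, add_comm]
    have hgw : g w = g h2 + g (w - h2) := by rw [← map_add]; congr 1; abel
    rw [hgw, gWherm h2 hh2W hh2herm, gskew _ hkskew, add_zero]
  have gstar : ∀ x : A, g (star x) = g x := by
    intro x
    obtain ⟨h2, hh2⟩ : ∃ y : A, y = ((1 / 2 : ℝ) : ℂ) • (x + star x) := ⟨_, rfl⟩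
    have hherm : star h2 = h2 := by rw [hh2, starSmul, star_add, star_star, add_comm]
    have hsum : h2 + h2 = x + star x := by rw [hh2]; push_cast; module
    have hkskew : star (x - h2) = -(x - h2) := by
      rw [star_sub, hherm, neg_sub, sub_eq_sub_iff_add_eq_add, hsum, add_comm]
    have e1 : g x = g h2 + g (x - h2) := by rw [← map_add]; congr 1; abel
    have e3 : star x = h2 - (x - h2) := by
      rw [show h2 - (x - h2) = h2 + h2 - x from by abel, hsum]; abel
    have e2 : g (star x) = g h2 - g (x - h2) := by rw [← map_sub, ← e3]
    rw [e1, e2, gskew _ hkskew]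
    ring
  -- the central hermitian idempotent machinery
  have central1 : ∀ (z : ℂ) (x : A), x * (z • (1 : A)) = z • x := fun z x => by
    rw [mul_smul_comm, mul_one]
  have central1' : ∀ (z : ℂ) (x : A), (z • (1 : A)) * x = z • x := fun z x => by
    rw [smul_mul_assoc, one_mul]
  obtain ⟨u, hu_def⟩ : ∃ u : A, u = star (Complex.I • (1 : A)) := ⟨_, rfl⟩
  have hucentral : ∀ x : A, x * u = u * x := by
    intro x
    have e1 : x * u = star ((Complex.I • (1 : A)) * star x) := by
      rw [star_mul, star_star, hu_def]
    have e2 : u * x = star (star x * (Complex.I • (1 : A))) := by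
      rw [star_mul, star_star, hu_def]
    rw [e1, e2, central1', central1]
  have hu2 : u * u = -1 := by
    rw [hu_def, ← star_mul, central1', smul_smul, Complex.I_mul_I, neg_smul, one_smul,
      star_neg, star_one]
  obtain ⟨sel, hsel⟩ : ∃ s : A, s = Complex.I • u := ⟨_, rfl⟩
  have hselP : sel ∈ P := by
    have h := hP.conj_mem 1 P1 (Complex.I • (1 : A))
    rw [mul_one, central1] at h
    rw [hsel, hu_def]
    exact h
  have hsherm : star sel = sel := hP.herm _ hselP
  have hselcentral : ∀ x : A, x * sel = sel * x := by
    intro x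
    rw [hsel, mul_smul_comm, smul_mul_assoc, hucentral]
  have hs2 : sel * sel = 1 := by
    rw [hsel, smul_mul_assoc, mul_smul_comm, smul_smul, Complex.I_mul_I, hu2]
    simp
  obtain ⟨e, he_def⟩ : ∃ e : A, e = ((1 / 2 : ℝ) : ℂ) • (1 - sel) := ⟨_, rfl⟩
  have hecentral : ∀ x : A, x * e = e * x := by
    intro x
    rw [he_def, mul_smul_comm, smul_mul_assoc, mul_sub, sub_mul, mul_one, one_mul,
      hselcentral]
  have heherm : star e = e := by rw [he_def, starSmul, star_sub, star_one, hsherm]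
  have hsq1s : (1 - sel) * (1 - sel) = (2 : ℂ) • (1 - sel) := by
    have hexp : (1 - sel) * (1 - sel) = 1 - sel - sel + sel * sel := by noncomm_ring
    rw [hexp, hs2]
    module
  have heP : e ∈ P := by
    have h1 : (1 - sel) * (1 - sel) ∈ P := by
      have h := Psq (1 - sel)
      rwa [star_sub, star_one, hsherm] at h
    rw [hsq1s] at h1
    have h2 := Psmul (1 / 4) (by norm_num) h1
    have hrw : ((1 / 4 : ℝ) : ℂ) • ((2 : ℂ) • (1 - sel)) = e := by
      rw [he_def, smul_smul]
      norm_num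
    rwa [hrw] at h2
  have he2 : e * e = e := by
    rw [he_def, smul_mul_assoc, mul_smul_comm, hsq1s, smul_smul, smul_smul]
    norm_num
  have hse : sel * e = -e := by
    rw [he_def, mul_smul_comm, mul_sub, mul_one, hs2]
    push_cast
    module
  have hu_eq : u = (-Complex.I) • sel := by
    rw [hsel, smul_smul]
    simp
  obtain ⟨c, hc_def⟩ : ∃ c : A, c = Complex.I • e := ⟨_, rfl⟩
  have hccentral : ∀ x : A, x * c = c * x := fun x => by
    rw [hc_def, mul_smul_comm, smul_mul_assoc, hecentral]
  have hcherm : star c = c := by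
    have e1 : c = e * (Complex.I • (1 : A)) := by rw [hc_def, central1]
    rw [e1, star_mul, heherm, ← hu_def, hu_eq, smul_mul_assoc, hse, central1, smul_neg,
      neg_smul, neg_neg]
  have hcc : c * c = -e := by
    rw [hc_def, smul_mul_assoc, mul_smul_comm, smul_smul, Complex.I_mul_I, he2, neg_smul,
      one_smul]
  have hnegeP : -e ∈ P := by
    have h := hP.conj_mem 1 P1 c
    rwa [mul_one, hcherm, hcc] at h
  have ge0 : g e = 0 := by
    have h1 := gP e heP
    have h2 := gP _ hnegeP
    rw [map_neg] at h2
    linarith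
  -- vanishing of g on i·(hermitians)
  have gih : ∀ h : A, star h = h → g (Complex.I • h) = 0 := by
    intro h hh
    have hstark : star (Complex.I • h) = (-Complex.I) • (h * sel) := by
      have e1 : Complex.I • h = (Complex.I • (1 : A)) * h := (central1' _ _).symm
      rw [e1, star_mul, hh, ← hu_def, hu_eq, mul_smul_comm]
    have hxm_herm : star (c * h) = c * h := by rw [star_mul, hh, hcherm, hccentral]
    have hch : c * h = Complex.I • (e * h) := by rw [hc_def, smul_mul_assoc]
    have h2eh : (2 : ℂ) • (e * h) = h - h * sel := by
      rw [← hecentral, he_def, mul_smul_comm, smul_smul, mul_sub, mul_one]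
      push_cast
      module
    have hsel_h : h * sel = h - (2 : ℂ) • (e * h) := by rw [h2eh]; abel
    have hxp_skew : star (Complex.I • h - c * h) = -(Complex.I • h - c * h) := by
      rw [star_sub, hstark, hxm_herm, hsel_h, hch]
      module
    have gxp : g (Complex.I • h - c * h) = 0 := gskew _ hxp_skew
    have gxm : g (c * h) = 0 := by
      have hec : e * c = c := by rw [hc_def, mul_smul_comm, he2]
      have hce : c * e = c := by rw [hc_def, smul_mul_assoc, he2]
      have h1 : e * (c * h) = c * h := by rw [← mul_assoc, hec]
      have h2 : (c * h) * e = c * h := by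
        rw [mul_assoc, hecentral h, ← mul_assoc, hce]
      have hq : ∀ t : ℝ, 0 ≤ 2 * t * g (c * h) + g ((c * h) * (c * h)) := by
        intro t
        have hz : ((t : ℂ) • e + c * h) * ((t : ℂ) • e + c * h)
            = ((t * t : ℝ) : ℂ) • e + ((2 * t : ℝ) : ℂ) • (c * h) + (c * h) * (c * h) := by
          have hexp : ∀ E C : A, ((t : ℂ) • E + C) * ((t : ℂ) • E + C)
              = ((t : ℂ) * (t : ℂ)) • (E * E) + (t : ℂ) • (E * C) + (t : ℂ) • (C * E)
                + C * C := by
            intro E C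
            simp only [mul_add, add_mul, smul_mul_assoc, mul_smul_comm, smul_smul]
            module
          rw [hexp e (c * h), he2, h1, h2]
          push_cast
          module
        have hzherm : star ((t : ℂ) • e + c * h) = (t : ℂ) • e + c * h := by
          rw [star_add, starSmul, heherm, hxm_herm]
        have hzP : ((t : ℂ) • e + c * h) * ((t : ℂ) • e + c * h) ∈ P := by
          have h3 := Psq ((t : ℂ) • e + c * h)
          rwa [hzherm] at h3
        have hgz := gP _ hzP
        rw [hz] at hgz
        rw [map_add, map_add, Complex.coe_smul, Complex.coe_smul, map_smul, map_smul,
          ge0, smul_eq_mul, smul_eq_mul, mul_zero, zero_add] at hgz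
        linarith
      by_contra hne
      have h9 := hq (-(g ((c * h) * (c * h)) + 1) / (2 * g (c * h)))
      have h10 : 2 * (-(g ((c * h) * (c * h)) + 1) / (2 * g (c * h))) * g (c * h)
          = -(g ((c * h) * (c * h)) + 1) := by
        field_simp
      linarith
    have hfin : g (Complex.I • h) = g (Complex.I • h - c * h) + g (c * h) := by
      rw [← map_add]; congr 1; abel
    rw [hfin, gxp, gxm, add_zero]
  -- assemble the state
  have φapp : ∀ x : A, (g.extendTo𝕜' : A →ₗ[ℂ] ℂ) x
      = (g x : ℂ) - Complex.I * (g (Complex.I • x) : ℂ) := by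
    intro x
    rfl
  refine ⟨g.extendTo𝕜', ⟨?_, ?_, ?_⟩, ?_, ?_⟩
  · rw [φapp, hg1, gih 1 (star_one A)]
    simp
  · intro x
    rw [φapp, φapp, gstar]
    have h0 : g (Complex.I • star x) = -g (Complex.I • x) := by
      have h1 := gih (x + star x) (by rw [star_add, star_star, add_comm])
      rw [smul_add, map_add] at h1
      linarith
    rw [h0]
    simp only [map_sub, map_mul, Complex.conj_I, Complex.conj_ofReal, Complex.ofReal_neg]
    ring
  · intro a ha
    refine ⟨g a, gP a ha, ?_⟩
    rw [φapp, gih a (hP.herm a ha)]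
    simp
  · intro w hw
    rw [φapp, gW w hw, gW _ (W.smul_mem Complex.I hw)]
    simp
  · refine ⟨g v, ?_, by rw [φapp, gih v hv]; simp⟩
    have h1 : 0 ≤ g (-v) := by
      refine hgK (-v) ⟨2, by norm_num, ?_⟩
      refine ⟨0, P0, 0, W.zero_mem, star_zero _, ?_⟩
      rw [star_neg, hv]
      push_cast
      module
    rw [map_neg] at h1
    linarith
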